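/- Assume f satisfies (f0)–(f4). Then F(t) > 0 for every real t ≠ 0. (Claim 1 in the proof of Lemma 2.3.) -/

import Mathlib

open Filter Set MeasureTheory

private lemma abs_rpow_tendsto0 (r : ℝ) (hr : 0 < r) :
    Tendsto (fun t : ℝ => |t| ^ r) (nhds 0) (nhds 0) := by
  have h : ContinuousAt (fun x : ℝ => x ^ r) (|(0:ℝ)|) :=
    Real.continuousAt_rpow_const _ _ (Or.inr hr.le)
  have h2 := h.comp continuous_abs.continuousAt
  have : ContinuousAt (fun t : ℝ => |t| ^ r) 0 := h2
  simpa [ContinuousAt, Real.zero_rpow hr.ne'] using this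

private lemma f_zero (q : ℝ) (hq : 1 < q) (f : ℝ → ℝ) (hf : Continuous f)
    (h1 : Tendsto (fun t : ℝ => f t / |t| ^ (q - 1)) (nhdsWithin 0 {0}ᶜ) (nhds 0)) :
    f 0 = 0 := by
  have habs : Tendsto (fun t : ℝ => |t| ^ (q - 1)) (nhdsWithin (0:ℝ) {0}ᶜ) (nhds 0) :=
    (abs_rpow_tendsto0 (q-1) (by linarith)).mono_left nhdsWithin_le_nhds
  have h2 : Tendsto f (nhdsWithin (0:ℝ) {0}ᶜ) (nhds 0) := by
    have h3 := h1.mul habs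
    rw [mul_zero] at h3
    refine h3.congr' ?_
    filter_upwards [self_mem_nhdsWithin] with t ht
    have : |t| ^ (q-1) ≠ 0 := by
      have : (0:ℝ) < |t| := abs_pos.mpr ht
      positivity
    field_simp
  have h3 : Tendsto f (nhdsWithin (0:ℝ) {0}ᶜ) (nhds (f 0)) :=
    (hf.continuousAt.tendsto).mono_left nhdsWithin_le_nhds
  exact tendsto_nhds_unique h3 h2

private lemma key_int (q : ℝ) (hq : 1 < q) (f : ℝ → ℝ) (hf : Continuous f) (hfz : f 0 = 0)
    (h1 : Tendsto (fun t : ℝ => f t / |t| ^ (q - 1)) (nhdsWithin 0 {0}ᶜ) (nhds 0)) :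
    Tendsto (fun t : ℝ => (∫ s in (0:ℝ)..t, f s) / |t| ^ q) (nhdsWithin 0 {0}ᶜ) (nhds 0) := by
  rw [NormedAddCommGroup.tendsto_nhds_zero]
  intro ε hε
  have h1' := (NormedAddCommGroup.tendsto_nhds_zero.mp h1) (ε/2) (by positivity)
  rw [Filter.Eventually, Metric.mem_nhdsWithin_iff] at h1' ⊢
  obtain ⟨δ, hδ, hδ'⟩ := h1'
  refine ⟨δ, hδ, fun t htm => ?_⟩
  obtain ⟨htδ, ht⟩ := htm
  rw [Metric.mem_ball] at htδ
  have ht0 : t ≠ 0 := ht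
  simp only [Set.mem_setOf_eq]
  have habs : (0:ℝ) < |t| := abs_pos.mpr ht0
  have htq : (0:ℝ) < |t| ^ q := Real.rpow_pos_of_pos habs q
  have hbound : ∀ x ∈ Set.uIoc (0:ℝ) t, ‖f x‖ ≤ ε/2 * |t| ^ (q-1) := by
    intro x hx
    have hxabs : |x| ≤ |t| := by
      rcases Set.mem_uIoc.mp hx with h | h
      · rw [abs_of_pos h.1]; exact h.2.trans (le_abs_self t)
      · rw [abs_of_nonpos h.2]; calc -x ≤ -t := by linarith [h.1]
          _ ≤ |t| := neg_le_abs t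
    rcases eq_or_ne x 0 with rfl | hx0
    · rw [hfz]; simp; positivity
    · have hxpos : (0:ℝ) < |x| := abs_pos.mpr hx0
      have hxr : (0:ℝ) < |x| ^ (q-1) := Real.rpow_pos_of_pos hxpos _
      have hxδ : dist x 0 < δ := by
        rw [Real.dist_eq, sub_zero]
        calc |x| ≤ |t| := hxabs
          _ < δ := by simpa [Real.dist_eq] using htδ
      have hb : ‖f x / |x| ^ (q-1)‖ < ε/2 := hδ' ⟨Metric.mem_ball.mpr hxδ, hx0⟩
      have h2 : ‖f x‖ = ‖f x / |x| ^ (q-1)‖ * |x| ^ (q-1) := by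
        rw [norm_div, Real.norm_eq_abs (|x| ^ (q-1)), abs_of_pos hxr,
          div_mul_cancel₀ _ hxr.ne']
      rw [h2]
      have h3 : |x| ^ (q-1) ≤ |t| ^ (q-1) :=
        Real.rpow_le_rpow (abs_nonneg x) hxabs (by linarith)
      calc ‖f x / |x| ^ (q-1)‖ * |x| ^ (q-1) ≤ (ε/2) * |t| ^ (q-1) := by
            apply mul_le_mul hb.le h3 hxr.le (by positivity)
        _ = ε/2 * |t| ^ (q-1) := rfl
  have hint := intervalIntegral.norm_integral_le_of_norm_le_const hbound
  rw [sub_zero] at hint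
  have hmul : ε/2 * |t| ^ (q-1) * |t| = ε/2 * |t| ^ q := by
    rw [mul_assoc, ← Real.rpow_add_one habs.ne' (q-1)]
    ring_nf
  rw [hmul] at hint
  have : ‖(∫ s in (0:ℝ)..t, f s) / |t| ^ q‖ ≤ ε/2 := by
    rw [norm_div, Real.norm_eq_abs (|t| ^ q), abs_of_pos htq, div_le_iff₀ htq]
    exact hint
  linarith

theorem stmt_1 (N : ℕ) (hN : 3 ≤ N) (p : ℝ) (hp2 : 2 ≤ p) (hpN : p < (N : ℝ))
    (f F Ft : ℝ → ℝ) (hf0 : Continuous f)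
    (hF : ∀ t : ℝ, F t = ∫ s in (0:ℝ)..t, f s)
    (hFt : ∀ t : ℝ, Ft t = f t * t - 2 * F t)
    (hf1 : Tendsto (fun t : ℝ => f t / |t| ^ (p + 2 * p / (N : ℝ) - 1)) (nhdsWithin 0 {0}ᶜ) (nhds 0))
    (hf2 : Tendsto (fun t : ℝ => f t / |t| ^ ((N : ℝ) * p / ((N : ℝ) - p) - 1)) (cocompact ℝ) (nhds 0))
    (hf3 : Tendsto (fun t : ℝ => F t / |t| ^ (p + 2 * p / (N : ℝ))) (cocompact ℝ) atTop)
    (hf4a : StrictAntiOn (fun t : ℝ => Ft t / |t| ^ (p + 2 * p / (N : ℝ))) (Iio 0))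
    (hf4b : StrictMonoOn (fun t : ℝ => Ft t / |t| ^ (p + 2 * p / (N : ℝ))) (Ioi 0)) :
    ∀ t : ℝ, t ≠ 0 → 0 < F t := by
  set q : ℝ := p + 2 * p / (N : ℝ) with hqdef
  have hNpos : (0:ℝ) < N := by exact_mod_cast Nat.lt_of_lt_of_le (by norm_num) hN
  have hppos : (0:ℝ) < p := by linarith
  have hq2 : 2 < q := by
    have : 0 < 2 * p / (N : ℝ) := by positivity
    simp only [hqdef]; linarith
  have hq1 : 1 < q := by linarith
  have hfz : f 0 = 0 := f_zero q hq1 f hf0 hf1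
  -- limit of F t / |t|^q at 0
  have hFlim : Tendsto (fun t : ℝ => F t / |t| ^ q) (nhdsWithin 0 {0}ᶜ) (nhds 0) :=
    (key_int q hq1 f hf0 hfz hf1).congr (fun t => by rw [hF t])
  -- limit of f t * t / |t|^q at 0
  have hftlim : Tendsto (fun t : ℝ => f t * t / |t| ^ q) (nhdsWithin 0 {0}ᶜ) (nhds 0) := by
    apply squeeze_zero_norm' (a := fun t : ℝ => ‖f t / |t| ^ (q - 1)‖)
    · filter_upwards [self_mem_nhdsWithin] with t ht
      have habs : (0:ℝ) < |t| := abs_pos.2 ht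
      have h1 : |t| ^ q = |t| ^ (q-1) * |t| := by
        rw [← Real.rpow_add_one habs.ne']; ring_nf
      have h2 : f t * t / |t| ^ q = (f t / |t| ^ (q-1)) * (t / |t|) := by
        rw [h1]; field_simp
      rw [h2, norm_mul]
      have h3 : ‖t / |t|‖ = 1 := by
        rw [norm_div, Real.norm_eq_abs, Real.norm_eq_abs, abs_abs, div_self habs.ne']
      rw [h3, mul_one]
    · have := hf1.norm; simpa using this
  -- limit of Ft t / |t|^q at 0
  have hFtlim : Tendsto (fun t : ℝ => Ft t / |t| ^ q) (nhdsWithin 0 {0}ᶜ) (nhds 0) := by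
    have h := hftlim.sub (hFlim.const_mul 2)
    rw [show (0:ℝ) - 2 * 0 = 0 by ring] at h
    refine h.congr fun t => ?_
    rw [hFt t]; ring
  have hne_pos : nhdsWithin (0:ℝ) (Ioi 0) ≤ nhdsWithin 0 {0}ᶜ :=
    nhdsWithin_mono 0 (fun x hx => ne_of_gt hx)
  have hne_neg : nhdsWithin (0:ℝ) (Iio 0) ≤ nhdsWithin 0 {0}ᶜ :=
    nhdsWithin_mono 0 (fun x hx => ne_of_lt hx)
  -- Ft nonneg quotient on each side
  have hposq : ∀ s : ℝ, 0 < s → 0 ≤ Ft s / |s| ^ q := by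
    intro s hs
    refine le_of_tendsto (hFtlim.mono_left hne_pos) ?_
    filter_upwards [Ioo_mem_nhdsGT_of_mem (show (0:ℝ) ∈ Ico 0 s from ⟨le_refl 0, hs⟩)] with u hu
    exact (hf4b (mem_Ioi.mpr hu.1) (mem_Ioi.mpr hs) hu.2).le
  have hnegq : ∀ s : ℝ, s < 0 → 0 ≤ Ft s / |s| ^ q := by
    intro s hs
    refine le_of_tendsto (hFtlim.mono_left hne_neg) ?_
    filter_upwards [Ioo_mem_nhdsLT_of_mem (show (0:ℝ) ∈ Ioc s 0 from ⟨hs, le_refl 0⟩)] with u hu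
    exact (hf4a (mem_Iio.mpr hs) (mem_Iio.mpr hu.2) hu.1).le
  -- Ft positive away from 0
  have hFtpos : ∀ t : ℝ, t ≠ 0 → 0 < Ft t := by
    intro t ht
    have habs : (0:ℝ) < |t| := abs_pos.2 ht
    have htq : (0:ℝ) < |t| ^ q := Real.rpow_pos_of_pos habs q
    have hdivpos : 0 < Ft t / |t| ^ q := by
      rcases lt_or_gt_of_ne ht with hlt | hgt
      · have h1 : Ft t / |t| ^ q > Ft (t/2) / |t/2| ^ q :=
          hf4a (mem_Iio.mpr hlt) (mem_Iio.mpr (by linarith)) (by linarith)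
        exact lt_of_le_of_lt (hnegq (t/2) (by linarith)) h1
      · have h1 : Ft (t/2) / |t/2| ^ q < Ft t / |t| ^ q :=
          hf4b (mem_Ioi.mpr (by linarith)) (mem_Ioi.mpr hgt) (by linarith)
        exact lt_of_le_of_lt (hposq (t/2) (by linarith)) h1
    have := mul_pos hdivpos htq
    rwa [div_mul_cancel₀ _ htq.ne'] at this
  -- derivative of F
  have hFderiv : ∀ t : ℝ, HasDerivAt F (f t) t := by
    intro t
    have h1 : HasDerivAt (fun u : ℝ => ∫ s in (0:ℝ)..u, f s) (f t) t :=
      intervalIntegral.integral_hasDerivAt_right (hf0.intervalIntegrable 0 t)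
        (hf0.aestronglyMeasurable.stronglyMeasurableAtFilter) hf0.continuousAt
    have hFeq : F = fun u : ℝ => ∫ s in (0:ℝ)..u, f s := funext hF
    rw [hFeq]; exact h1
  have hFcont : Continuous F := by
    rw [continuous_iff_continuousAt]; exact fun t => (hFderiv t).continuousAt
  -- derivative of g = F / t^2
  have hgderiv : ∀ t : ℝ, t ≠ 0 → HasDerivAt (fun u : ℝ => F u / u ^ 2) (Ft t / t ^ 3) t := by
    intro t ht
    have h1 := (hFderiv t).div (hasDerivAt_pow 2 t) (pow_ne_zero 2 ht)
    refine h1.congr_deriv ?_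
    rw [hFt t]
    field_simp
    ring
  have hgcont : ∀ s : Set ℝ, (0:ℝ) ∉ s → ContinuousOn (fun u : ℝ => F u / u ^ 2) s := by
    intro s hs
    exact ContinuousOn.div hFcont.continuousOn (continuous_pow 2).continuousOn
      (fun x hx => pow_ne_zero 2 (fun h => hs (h ▸ hx)))
  -- g strictly monotone on Ioi 0
  have hgmono : StrictMonoOn (fun u : ℝ => F u / u ^ 2) (Ioi 0) := by
    apply strictMonoOn_of_deriv_pos (convex_Ioi 0) (hgcont _ (by simp))
    intro x hx
    rw [interior_Ioi] at hx
    rw [(hgderiv x (ne_of_gt hx)).deriv]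
    exact div_pos (hFtpos x (ne_of_gt hx)) (pow_pos hx 3)
  have hganti : StrictAntiOn (fun u : ℝ => F u / u ^ 2) (Iio 0) := by
    apply strictAntiOn_of_deriv_neg (convex_Iio 0) (hgcont _ (by simp))
    intro x hx
    rw [interior_Iio] at hx
    rw [(hgderiv x (ne_of_lt hx)).deriv]
    apply div_neg_of_pos_of_neg (hFtpos x (ne_of_lt hx))
    exact Odd.pow_neg (by decide) hx
  -- limit of g at 0
  have hglim : Tendsto (fun t : ℝ => F t / t ^ 2) (nhdsWithin 0 {0}ᶜ) (nhds 0) := by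
    have h2 : Tendsto (fun t : ℝ => |t| ^ (q - 2)) (nhdsWithin (0:ℝ) {0}ᶜ) (nhds 0) :=
      (abs_rpow_tendsto0 (q-2) (by linarith)).mono_left nhdsWithin_le_nhds
    have h3 := hFlim.mul h2
    rw [zero_mul] at h3
    refine h3.congr' ?_
    filter_upwards [self_mem_nhdsWithin] with t ht
    have habs : (0:ℝ) < |t| := abs_pos.2 ht
    have e1 : |t| ^ q = |t| ^ (q-2) * t ^ 2 := by
      rw [← sq_abs, ← Real.rpow_natCast |t| 2, ← Real.rpow_add habs]
      norm_num
    have h4 : |t| ^ (q-2) ≠ 0 := by positivity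
    have h5 : t ^ 2 ≠ 0 := pow_ne_zero 2 ht
    rw [e1]
    field_simp
  -- g nonneg on each side
  have hgpos : ∀ s : ℝ, 0 < s → 0 ≤ F s / s ^ 2 := by
    intro s hs
    refine le_of_tendsto (hglim.mono_left hne_pos) ?_
    filter_upwards [Ioo_mem_nhdsGT_of_mem (show (0:ℝ) ∈ Ico 0 s from ⟨le_refl 0, hs⟩)] with u hu
    exact (hgmono (mem_Ioi.mpr hu.1) (mem_Ioi.mpr hs) hu.2).le
  have hgneg : ∀ s : ℝ, s < 0 → 0 ≤ F s / s ^ 2 := by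
    intro s hs
    refine le_of_tendsto (hglim.mono_left hne_neg) ?_
    filter_upwards [Ioo_mem_nhdsLT_of_mem (show (0:ℝ) ∈ Ioc s 0 from ⟨hs, le_refl 0⟩)] with u hu
    exact (hganti (mem_Iio.mpr hs) (mem_Iio.mpr hu.2) hu.1).le
  -- conclusion
  intro t ht
  have h5 : 0 < F t / t ^ 2 := by
    rcases lt_or_gt_of_ne ht with hlt | hgt
    · have h1 : F t / t ^ 2 > F (t/2) / (t/2) ^ 2 :=
        hganti (mem_Iio.mpr hlt) (mem_Iio.mpr (by linarith)) (by linarith)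
      exact lt_of_le_of_lt (hgneg (t/2) (by linarith)) h1
    · have h1 : F (t/2) / (t/2) ^ 2 < F t / t ^ 2 :=
        hgmono (mem_Ioi.mpr (by linarith)) (mem_Ioi.mpr hgt) (by linarith)
      exact lt_of_le_of_lt (hgpos (t/2) (by linarith)) h1
  have ht2 : (0:ℝ) < t ^ 2 := by positivity
  have := mul_pos h5 ht2
  rwa [div_mul_cancel₀ _ ht2.ne'] at this
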